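/- Let G be a compact metrizable group and n ≥ 1 a fixed integer. The set of compact subgroups K of G having at least n connected components is open in the space 𝒮(G) of compact subgroups of G with the Hausdorff metric. -/

import Mathlib

open TopologicalSpace

/-- For a compact metrizable group `G` and `n ≥ 1`, the set of compact subgroups of `G` having
at least `n` connected components is open in the space of compact subgroups of `G` with the
Hausdorff metric. -/
theorem isOpen_atLeast_n_components {G : Type*} [MetricSpace G] [Group G] [IsTopologicalGroup G]
    [CompactSpace G] (n : ℕ) (hn : 1 ≤ n) :
    IsOpen {K : {L : NonemptyCompacts G // ∃ H : Subgroup G, (L : Set G) = H} |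
      ∃ f : Fin n → ConnectedComponents (K.1 : Set G), Function.Injective f} := by
  rw [Metric.isOpen_iff]
  rintro K ⟨f, hf⟩
  -- pick representatives of the components
  choose x hx using fun i => ConnectedComponents.surjective_coe (f i)
  haveI : CompactSpace (K.1 : Set G) := isCompact_iff_compactSpace.mp K.1.isCompact
  -- for each pair i ≠ j, a clopen set separating x i from x j
  have key : ∀ i j : Fin n, i ≠ j → ∃ U : Set (K.1 : Set G),
      IsClopen U ∧ x i ∈ U ∧ x j ∉ U := by
    intro i j hij
    have hne : (x i : ConnectedComponents (K.1 : Set G)) ≠ x j := by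
      rw [hx i, hx j]; exact fun h => hij (hf h)
    rw [ConnectedComponents.coe_ne_coe] at hne
    have hmem : x j ∉ connectedComponent (x i) := by
      intro h
      exact hne (connectedComponent_eq h)
    rw [connectedComponent_eq_iInter_isClopen] at hmem
    simp only [Set.mem_iInter, not_forall] at hmem
    obtain ⟨⟨U, hU, hxU⟩, hjU⟩ := hmem
    exact ⟨U, hU, hxU, hjU⟩
  choose U hUclopen hxiU hxjU using fun p : Fin n × Fin n =>
    fun h : p.1 ≠ p.2 => key p.1 p.2 h
  -- for each pair, positive distance between thickenings of the two clopen halves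
  have key2 : ∀ p : Fin n × Fin n, ∃ δ : ℝ, 0 < δ ∧ ∀ h : p.1 ≠ p.2,
      Disjoint (Metric.thickening δ (Subtype.val '' U p h))
        (Metric.thickening δ (Subtype.val '' (U p h)ᶜ)) := by
    intro p
    by_cases h : p.1 ≠ p.2
    · have hA : IsCompact (Subtype.val '' U p h) :=
        ((hUclopen p h).isClosed.isCompact).image continuous_subtype_val
      have hB : IsClosed (Subtype.val '' (U p h)ᶜ) :=
        ((hUclopen p h).compl.isClosed.isCompact.image continuous_subtype_val).isClosed
      have hdisj : Disjoint (Subtype.val '' U p h) (Subtype.val '' (U p h)ᶜ) :=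
        (Set.disjoint_image_iff Subtype.val_injective).mpr disjoint_compl_right
      obtain ⟨δ, hδ, hd⟩ := hdisj.exists_thickenings hA hB
      exact ⟨δ, hδ, fun _ => hd⟩
    · exact ⟨1, one_pos, fun h' => absurd h' h⟩
  choose δ hδpos hδ using key2
  haveI : Nonempty (Fin n) := ⟨⟨0, hn⟩⟩
  obtain ⟨ε, hεpos, hεle⟩ : ∃ ε : ℝ, 0 < ε ∧ ∀ p, ε ≤ δ p := by
    obtain ⟨p₀, hp₀⟩ := Finset.exists_min_image Finset.univ δ ⟨(Classical.arbitrary _, Classical.arbitrary _), Finset.mem_univ _⟩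
    exact ⟨δ p₀, hδpos p₀, fun p => hp₀.2 p (Finset.mem_univ p)⟩
  refine ⟨ε, hεpos, fun L hL => ?_⟩
  -- L is within Hausdorff distance ε of K
  have hdist : Metric.hausdorffDist (L.1 : Set G) (K.1 : Set G) < ε := by
    have := hL
    rw [Metric.mem_ball, Subtype.dist_eq, Metric.NonemptyCompacts.dist_eq] at this
    exact this
  have hfin : EMetric.hausdorffEdist (L.1 : Set G) (K.1 : Set G) ≠ ⊤ :=
    Metric.hausdorffEdist_ne_top_of_nonempty_of_bounded L.1.nonempty K.1.nonempty
      L.1.isCompact.isBounded K.1.isCompact.isBounded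
  -- pick points of L near the x i
  have hy : ∀ i : Fin n, ∃ y ∈ (L.1 : Set G), dist (x i : G) y < ε := by
    intro i
    have := Metric.exists_dist_lt_of_hausdorffDist_lt' (x i).2 hdist hfin
    obtain ⟨y, hyL, hy⟩ := this
    exact ⟨y, hyL, by rwa [dist_comm]⟩
  choose y hyL hyd using hy
  haveI : CompactSpace (L.1 : Set G) := isCompact_iff_compactSpace.mp L.1.isCompact
  refine ⟨fun i => ConnectedComponents.mk ⟨y i, hyL i⟩, ?_⟩
  intro i j hij
  by_contra hne
  -- the clopen separating set in L
  set A : Set G := Subtype.val '' U (i, j) hne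
  set B : Set G := Subtype.val '' (U (i, j) hne)ᶜ
  have hABdisj := hδ (i, j) hne
  set W : Set (L.1 : Set G) := Subtype.val ⁻¹' Metric.thickening (δ (i, j)) A with hW
  have hABcover : ∀ z ∈ (L.1 : Set G), z ∈ Metric.thickening (δ (i, j)) A ∪
      Metric.thickening (δ (i, j)) B := by
    intro z hz
    obtain ⟨k, hkK, hk⟩ := Metric.exists_dist_lt_of_hausdorffDist_lt hz hdist hfin
    have hk' : dist z k < δ (i, j) := lt_of_lt_of_le hk (hεle _)
    by_cases hkA : (⟨k, hkK⟩ : (K.1 : Set G)) ∈ U (i, j) hne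
    · exact Or.inl (Metric.mem_thickening_iff.mpr ⟨k, ⟨⟨k, hkK⟩, hkA, rfl⟩, hk'⟩)
    · exact Or.inr (Metric.mem_thickening_iff.mpr ⟨k, ⟨⟨k, hkK⟩, hkA, rfl⟩, hk'⟩)
  have hWclopen : IsClopen W := by
    constructor
    · -- closed: complement is open
      rw [← isOpen_compl_iff]
      have : Wᶜ = Subtype.val ⁻¹' Metric.thickening (δ (i, j)) B := by
        ext ⟨z, hz⟩
        simp only [Set.mem_compl_iff, hW, Set.mem_preimage]
        constructor
        · intro h
          rcases hABcover z hz with h' | h'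
          · exact absurd h' h
          · exact h'
        · intro hB' hA'
          exact (hABdisj.le_bot ⟨hA', hB'⟩ : _)
      rw [this]
      exact Metric.isOpen_thickening.preimage continuous_subtype_val
    · exact Metric.isOpen_thickening.preimage continuous_subtype_val
  have hyiW : (⟨y i, hyL i⟩ : (L.1 : Set G)) ∈ W := by
    refine Metric.mem_thickening_iff.mpr ⟨x i, ⟨x i, hxiU (i, j) hne, rfl⟩, ?_⟩
    rw [dist_comm]
    exact lt_of_lt_of_le (hyd i) (hεle (i, j))
  have hyjW : (⟨y j, hyL j⟩ : (L.1 : Set G)) ∉ W := by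
    intro hmem
    have hB : (y j : G) ∈ Metric.thickening (δ (i, j)) B := by
      refine Metric.mem_thickening_iff.mpr ⟨x j, ⟨x j, hxjU (i, j) hne, rfl⟩, ?_⟩
      rw [dist_comm]
      exact lt_of_lt_of_le (hyd j) (hεle (i, j))
    exact hABdisj.le_bot ⟨hmem, hB⟩
  apply hyjW
  apply hWclopen.connectedComponent_subset hyiW
  rw [ConnectedComponents.coe_eq_coe] at hij
  rw [hij]
  exact mem_connectedComponent
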